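/- For f, g in SL(2,C), \gamma(f, g f g^{-1}) = \gamma(f,g)(\gamma(f,g) - \beta(f)). -/

import Mathlib

open Matrix

namespace Stmt4

/-- `β(h) = (tr h)² - 4` -/
noncomputable def β (h : SpecialLinearGroup (Fin 2) ℂ) : ℂ :=
  (Matrix.trace (h : Matrix (Fin 2) (Fin 2) ℂ)) ^ 2 - 4

/-- `γ(f,g) = tr (f g f⁻¹ g⁻¹) - 2` -/
noncomputable def γ (f g : SpecialLinearGroup (Fin 2) ℂ) : ℂ :=
  Matrix.trace ((f * g * f⁻¹ * g⁻¹ : SpecialLinearGroup (Fin 2) ℂ) :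
    Matrix (Fin 2) (Fin 2) ℂ) - 2

set_option maxHeartbeats 1000000 in
lemma key (a b c d p q r s : ℂ) (hA : a*d - b*c = 1) (hB : p*s - q*r = 1) :
    Matrix.trace (!![a,b;c,d]*!![p,q;r,s]*!![a,b;c,d]*!![s,-q;-r,p]*!![d,-b;-c,a]*!![p,q;r,s]*!![d,-b;-c,a]*!![s,-q;-r,p]) - 2 =
    (Matrix.trace (!![a,b;c,d]*!![p,q;r,s]*!![d,-b;-c,a]*!![s,-q;-r,p]) - 2) *
      ((Matrix.trace (!![a,b;c,d]*!![p,q;r,s]*!![d,-b;-c,a]*!![s,-q;-r,p]) - 2) -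
        ((Matrix.trace !![a,b;c,d])^2-4)) := by
  simp only [Matrix.mul_fin_two, Matrix.trace_fin_two_of]
  linear_combination ((-4) + (-2)*q*r + (4)*p*s + (2)*p*q*r*s + (-2)*p^2*s^2 + (-2)*d^2*q*r + (2)*d^2*p*s + (1)*c*d*q*s + (1)*c*d*q^2*r*s + (-1)*c*d*p*q + (-1)*c*d*p*q*s^2 + (-1)*c*d*p*q^2*r + (1)*c*d*p^2*q*s + (2)*c^2*q^2 + (2)*c^2*q^3*r + (-2)*c^2*p*q^2*s + (1)*b*d*r*s + (1)*b*d*q*r^2*s + (-1)*b*d*p*r + (-1)*b*d*p*r*s^2 + (-1)*b*d*p*q*r^2 + (1)*b*d*p^2*r*s + (-2)*b*c*s^2 + (-2)*b*c*q*r + (-2)*b*c*q*r*s^2 + (4)*b*c*p*s + (2)*b*c*p*s^3 + (2)*b*c*p*q*r*s + (-2)*b*c*p^2 + (-2)*b*c*p^2*s^2 + (-2)*b*c*p^2*q*r + (2)*b*c*p^3*s + (2)*b^2*r^2 + (2)*b^2*q*r^3 + (-2)*b^2*p*r^2*s + (-2)*a*d*q*r + (4)*a*d*p*s + (2)*a*d*p*q*r*s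 + (-2)*a*d*p^2*s^2 + (-1)*a*c*q*s + (-1)*a*c*q^2*r*s + (1)*a*c*p*q + (1)*a*c*p*q*s^2 + (1)*a*c*p*q^2*r + (-1)*a*c*p^2*q*s + (-1)*a*b*r*s + (-1)*a*b*q*r^2*s + (1)*a*b*p*r + (1)*a*b*p*r*s^2 + (1)*a*b*p*q*r^2 + (-1)*a*b*p^2*r*s + (-2)*a^2*q*r + (2)*a^2*p*s) * hA + ((2) + (-2)*p*s + (2)*d^2 + (1)*d^4*q*r + (-1)*c*d*q*s + (1)*c*d*p*q + (-1)*c*d^3*q*s + (1)*c*d^3*p*q + (-2)*c^2*q^2 + (-1)*c^2*d^2*q^2 + (-1)*b*d*r*s + (1)*b*d*p*r + (-1)*b*d^3*r*s + (1)*b*d^3*p*r + (4)*b*c + (2)*b*c*s^2 + (-4)*b*c*p*s + (2)*b*c*p^2 + (1)*b*c*d^2*s^2 + (2)*b*c*d^2*q*r + (-2)*b*c*d^2*p*s + (1)*b*c*d^2*p^2 + (-1)*b*c^2*d*q*s + (1)*b*c^2*d*p*q + (-2)*b*c^3*q^2 + (-2)*b^2*r^2 + (-1)*b^2*d^2*r^2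 + (-1)*b^2*c*d*r*s + (1)*b^2*c*d*p*r + (2)*b^2*c^2*s^2 + (2)*b^2*c^2*q*r + (-4)*b^2*c^2*p*s + (2)*b^2*c^2*p^2 + (-2)*b^3*c*r^2 + (1)*a*c*q*s + (-1)*a*c*p*q + (1)*a*b*r*s + (-1)*a*b*p*r + (1)*a*b*c^2*q*s + (-1)*a*b*c^2*p*q + (1)*a*b^2*c*r*s + (-1)*a*b^2*c*p*r + (2)*a^2 + (-1)*a^2*c^2*q^2 + (1)*a^2*b*c*s^2 + (2)*a^2*b*c*q*r + (-2)*a^2*b*c*p*s + (1)*a^2*b*c*p^2 + (-1)*a^2*b^2*r^2 + (1)*a^3*c*q*s + (-1)*a^3*c*p*q + (1)*a^3*b*r*s + (-1)*a^3*b*p*r + (1)*a^4*q*r) * hB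

/-- `γ(f, g f g⁻¹) = γ(f,g) (γ(f,g) - β(f))`. -/
theorem gamma_conj (f g : SpecialLinearGroup (Fin 2) ℂ) :
    γ f (g * f * g⁻¹) = γ f g * (γ f g - β f) := by
  have h1 : f * (g*f*g⁻¹) * f⁻¹ * (g*f*g⁻¹)⁻¹ = f*g*f*g⁻¹*f⁻¹*g*f⁻¹*g⁻¹ := by group
  have hA : (f : Matrix (Fin 2) (Fin 2) ℂ) 0 0 * (f : Matrix (Fin 2) (Fin 2) ℂ) 1 1
      - (f : Matrix (Fin 2) (Fin 2) ℂ) 0 1 * (f : Matrix (Fin 2) (Fin 2) ℂ) 1 0 = 1 := by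
    have := f.2; rwa [Matrix.det_fin_two] at this
  have hB : (g : Matrix (Fin 2) (Fin 2) ℂ) 0 0 * (g : Matrix (Fin 2) (Fin 2) ℂ) 1 1
      - (g : Matrix (Fin 2) (Fin 2) ℂ) 0 1 * (g : Matrix (Fin 2) (Fin 2) ℂ) 1 0 = 1 := by
    have := g.2; rwa [Matrix.det_fin_two] at this
  simp only [γ, β, h1, Matrix.SpecialLinearGroup.coe_mul, Matrix.SpecialLinearGroup.coe_inv,
    Matrix.adjugate_fin_two]
  rw [Matrix.eta_fin_two (f : Matrix (Fin 2) (Fin 2) ℂ),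
      Matrix.eta_fin_two (g : Matrix (Fin 2) (Fin 2) ℂ)]
  simp only [Matrix.cons_val', Matrix.cons_val_zero, Matrix.cons_val_one, Matrix.head_cons,
    Matrix.head_fin_const, Matrix.empty_val', Matrix.cons_val_fin_one, Matrix.of_apply]
  exact key _ _ _ _ _ _ _ _ hA hB

end Stmt4
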